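/- Let f(x,y) = -x²/8 - y²/2 + (3/5)xy on ℝ². Then (0,0) is a critical point of f which is not a local min-max point, yet for every α with 0 < α < 1/1.34, both (complex) eigenvalues of the Jacobian of the GDA map at (0,0), namely the matrix [[1 + α/4, -3α/5],[3α/5, 1 - α]], have modulus strictly less than 1. Hence there exist GDA-stable critical points which are not local min-max points. -/

import Mathlib

open Filter Topology Matrix

/-- For `f(x,y) = -x²/8 - y²/2 + (3/5)xy`, the origin is a critical
point of `f` which is not a local min-max point, yet for every `0 < α < 1/1.34` both
complex eigenvalues of the GDA Jacobian `[[1 + α/4, -(3 * α / 5)], [3α/5, 1 - α]]` at the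
origin have modulus strictly less than `1`.  Hence there exist GDA-stable critical
points which are not local min-max points. -/
theorem gda_stable_not_localMinMax
    (f : ℝ × ℝ → ℝ) (hf : ∀ p : ℝ × ℝ, f p = -(p.1 ^ 2) / 8 - p.2 ^ 2 / 2 + (3 / 5) * p.1 * p.2) :
    fderiv ℝ f (0, 0) = 0 ∧
    ¬ (∃ U ∈ 𝓝 ((0, 0) : ℝ × ℝ), ∀ q ∈ U, f (0, q.2) ≤ f (0, 0) ∧ f (0, 0) ≤ f (q.1, 0)) ∧
    ∀ α : ℝ, 0 < α → α < 1 / 1.34 →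
      ∀ μ ∈ spectrum ℂ
        ((!![1 + α / 4, -(3 * α / 5); 3 * α / 5, 1 - α]).map Complex.ofReal),
        ‖μ‖ < 1 := by
  have hf' : f = fun p : ℝ × ℝ => -(p.1 ^ 2) / 8 - p.2 ^ 2 / 2 + (3 / 5) * p.1 * p.2 :=
    funext hf
  subst hf'
  refine ⟨?_, ?_, ?_⟩
  · -- critical point
    have h1 : HasFDerivAt (fun p : ℝ × ℝ => p.1) (ContinuousLinearMap.fst ℝ ℝ ℝ)
        ((0, 0) : ℝ × ℝ) := hasFDerivAt_fst
    have h2 : HasFDerivAt (fun p : ℝ × ℝ => p.2) (ContinuousLinearMap.snd ℝ ℝ ℝ)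
        ((0, 0) : ℝ × ℝ) := hasFDerivAt_snd
    have H := ((((h1.mul h1).const_mul (1 / 8)).neg.sub ((h2.mul h2).const_mul (1 / 2))).add
      ((h1.const_mul (3 / 5)).mul h2))
    have hfun : (fun p : ℝ × ℝ => -(p.1 ^ 2) / 8 - p.2 ^ 2 / 2 + (3 / 5) * p.1 * p.2)
        = (fun p : ℝ × ℝ => -((1 / 8) * (p.1 * p.1)) - (1 / 2) * (p.2 * p.2)
            + (3 / 5) * p.1 * p.2) := by
      funext p; ring
    have H0 : HasFDerivAt (fun p : ℝ × ℝ => -(p.1 ^ 2) / 8 - p.2 ^ 2 / 2 + (3 / 5) * p.1 * p.2)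
        (0 : ℝ × ℝ →L[ℝ] ℝ) ((0, 0) : ℝ × ℝ) := by
      rw [hfun]
      refine H.congr_fderiv ?_
      apply ContinuousLinearMap.ext
      intro v
      simp
    exact H0.fderiv
  · -- not local min-max
    rintro ⟨U, hU, h⟩
    rw [Metric.mem_nhds_iff] at hU
    obtain ⟨ε, hε, hball⟩ := hU
    have hq : ((ε / 2, 0) : ℝ × ℝ) ∈ U := by
      apply hball
      have hd : dist ((ε / 2, 0) : ℝ × ℝ) ((0, 0) : ℝ × ℝ) = ε / 2 := by
        rw [Prod.dist_eq]
        simp [Real.dist_eq, abs_of_pos hε]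
        positivity
      rw [Metric.mem_ball, hd]
      linarith
    have h2 := (h _ hq).2
    norm_num at h2
    nlinarith
  · -- spectrum
    intro α hα hα' μ hμ
    have hα1 : α < 1 := by
      norm_num at hα'
      linarith
    rw [spectrum.mem_iff] at hμ
    rw [Matrix.isUnit_iff_isUnit_det, isUnit_iff_ne_zero, not_ne_iff] at hμ
    rw [Matrix.det_fin_two] at hμ
    have e : ∀ i j, (algebraMap ℂ (Matrix (Fin 2) (Fin 2) ℂ) μ -
        (!![1 + α / 4, -(3 * α / 5); 3 * α / 5, 1 - α]).map Complex.ofReal) i j =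
        !![μ - (1 + (α:ℂ) / 4), 3 * (α:ℂ) / 5; -(3 * (α:ℂ) / 5), μ - (1 - (α:ℂ))] i j := by
      intro i j
      fin_cases i <;> fin_cases j <;>
        simp [Matrix.algebraMap_eq_diagonal, Matrix.sub_apply, Matrix.diagonal_apply] <;> ring
    rw [e 0 0, e 1 1, e 0 1, e 1 0] at hμ
    simp at hμ
    have hfac : (μ - (1 - (α:ℂ) / 5)) * (μ - (1 - 11 * (α:ℂ) / 20)) = 0 := by
      linear_combination hμ
    rcases mul_eq_zero.1 hfac with h | h
    · have : μ = ((1 - α / 5 : ℝ) : ℂ) := by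
        push_cast; linear_combination h
      rw [this, Complex.norm_real, Real.norm_eq_abs, abs_lt]
      constructor <;> nlinarith
    · have : μ = ((1 - 11 * α / 20 : ℝ) : ℂ) := by
        push_cast; linear_combination h
      rw [this, Complex.norm_real, Real.norm_eq_abs, abs_lt]
      constructor <;> nlinarith
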